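/- For every dimension d ≥ 1 and every α ∈ (0,1), there exists a constant C = C(d, α) > 0 such that for every continuously differentiable integrable function u : ℝ^d → ℝ with ∫|∇u| < ∞, the Gagliardo seminorm satisfies ∫∫ |u(x) - u(y)| / |x - y|^(d+1-α) dx dy ≤ C (∫ |∇u|)^(1-α) (∫ |u|)^α. -/

import Mathlib

open MeasureTheory Filter

section Aux
open Measure Set Metric Real
open scoped ENNReal

lemma my_lintegral_fun_norm_addHaar {F : Type*} [NormedAddCommGroup F] [NormedSpace ℝ F]
    [MeasurableSpace F] [BorelSpace F] [FiniteDimensional ℝ F] [Nontrivial F]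
    (μ : Measure F) [μ.IsAddHaarMeasure] (f : ℝ → ℝ≥0∞) (hf : Measurable f) :
    ∫⁻ x, f ‖x‖ ∂μ = μ.toSphere Set.univ *
      ∫⁻ r in Set.Ioi (0:ℝ), ENNReal.ofReal (r ^ (Module.finrank ℝ F - 1)) * f r := by
  have h1 : ∫⁻ x, f ‖x‖ ∂μ = ∫⁻ x in ({(0:F)}ᶜ), f ‖x‖ ∂μ := by
    rw [MeasureTheory.restrict_compl_singleton (0:F)]
  rw [h1, ← lintegral_subtype_comap (measurableSet_singleton (0:F)).compl (fun x => f ‖x‖)]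
  have hfm : Measurable (fun p : sphere (0:F) 1 × Set.Ioi (0:ℝ) => f p.2.1) :=
    hf.comp (measurable_subtype_coe.comp measurable_snd)
  have h2 := (μ.measurePreserving_homeomorphUnitSphereProd).lintegral_comp
    (f := fun p : sphere (0:F) 1 × Set.Ioi (0:ℝ) => f p.2.1) hfm
  have h3 : (fun x : ({(0:F)}ᶜ : Set F) => f ‖(x:F)‖)
      = fun x => f ((homeomorphUnitSphereProd F x).2 : ℝ) := by
    funext x; rw [homeomorphUnitSphereProd_apply_snd_coe]
  rw [h3, h2]
  have h4 : ∫⁻ p : sphere (0:F) 1 × Set.Ioi (0:ℝ), f p.2.1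
        ∂(μ.toSphere.prod (.volumeIoiPow (Module.finrank ℝ F - 1)))
      = μ.toSphere Set.univ * ∫⁻ r : Set.Ioi (0:ℝ), f r.1
          ∂(Measure.volumeIoiPow (Module.finrank ℝ F - 1)) := by
    rw [MeasureTheory.lintegral_prod _ hfm.aemeasurable]
    simp [lintegral_const, mul_comm]
  rw [h4]
  congr 1
  have h5 : ∫⁻ r : Set.Ioi (0:ℝ), f r.1 ∂(Measure.volumeIoiPow (Module.finrank ℝ F - 1))
      = ∫⁻ r : Set.Ioi (0:ℝ),
          (ENNReal.ofReal (r.1 ^ (Module.finrank ℝ F - 1)) * f r.1)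
          ∂(Measure.comap Subtype.val volume) := by
    rw [Measure.volumeIoiPow]
    exact lintegral_withDensity_eq_lintegral_mul _ (by fun_prop)
      (hf.comp measurable_subtype_coe)
  rw [h5]
  exact lintegral_subtype_comap measurableSet_Ioi
    (fun r : ℝ => ENNReal.ofReal (r ^ (Module.finrank ℝ F - 1)) * f r)

variable {d : ℕ}

local notation "E" => EuclideanSpace ℝ (Fin d)

lemma aux_nontrivial (hd : 1 ≤ d) : Nontrivial E := by
  haveI : Nonempty (Fin d) := ⟨⟨0, hd⟩⟩
  infer_instance

lemma K1 (hd : 1 ≤ d) {α : ℝ} (hα : α ∈ Set.Ioo (0:ℝ) 1) {R : ℝ} (hR : 0 < R) :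
    ∫⁻ h in ball (0:E) R, ENNReal.ofReal (‖h‖ ^ (α - (d:ℝ)))
      = (volume : Measure E).toSphere Set.univ * ENNReal.ofReal (R ^ α / α) := by
  haveI := aux_nontrivial hd
  set f : ℝ → ℝ≥0∞ := fun t => (Set.Ioo 0 R).indicator
    (fun t => ENNReal.ofReal (t ^ (α - (d:ℝ)))) t with hf
  have hfm : Measurable f := by
    apply Measurable.indicator _ measurableSet_Ioo
    fun_prop
  have key := my_lintegral_fun_norm_addHaar (volume : Measure E) f hfm
  have hL : ∫⁻ x : E, f ‖x‖ = ∫⁻ h in ball (0:E) R, ENNReal.ofReal (‖h‖ ^ (α - (d:ℝ))) := by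
    have h1 : (fun x : E => f ‖x‖) = (ball (0:E) R \ {0}).indicator
        (fun x => ENNReal.ofReal (‖x‖ ^ (α - (d:ℝ)))) := by
      funext x
      by_cases hx : x ∈ ball (0:E) R \ {0}
      · rw [Set.indicator_of_mem hx, hf]
        have : ‖x‖ ∈ Set.Ioo 0 R := ⟨norm_pos_iff.2 hx.2, mem_ball_zero_iff.1 hx.1⟩
        simp [Set.indicator_of_mem this]
      · rw [Set.indicator_of_notMem hx, hf]
        have : ‖x‖ ∉ Set.Ioo 0 R := by
          intro hc
          refine hx ⟨mem_ball_zero_iff.2 hc.2, ?_⟩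
          simp only [Set.mem_singleton_iff]
          intro h0
          rw [h0, norm_zero] at hc
          exact lt_irrefl _ hc.1
        simp [Set.indicator_of_notMem this]
    rw [h1, lintegral_indicator (measurableSet_ball.diff (measurableSet_singleton _)) _]
    apply setLIntegral_congr
    exact (diff_ae_eq_self).2 (measure_mono_null (Set.inter_subset_right) (measure_singleton 0))
  have hfr : Module.finrank ℝ (EuclideanSpace ℝ (Fin d)) = d := finrank_euclideanSpace_fin
  have hR' : ∫⁻ r in Set.Ioi (0:ℝ),
        ENNReal.ofReal (r ^ (Module.finrank ℝ (EuclideanSpace ℝ (Fin d)) - 1)) * f r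
      = ENNReal.ofReal (R ^ α / α) := by
    have h2 : (fun r : ℝ => ENNReal.ofReal (r ^ (Module.finrank ℝ (EuclideanSpace ℝ (Fin d)) - 1)) * f r)
        = (Set.Ioo 0 R).indicator (fun r => ENNReal.ofReal (r ^ (d - 1)) *
            ENNReal.ofReal (r ^ (α - (d:ℝ)))) := by
      funext r
      by_cases hr : r ∈ Set.Ioo 0 R
      · simp [hf, Set.indicator_of_mem hr, hfr]
      · simp [hf, Set.indicator_of_notMem hr]
    rw [h2, lintegral_indicator measurableSet_Ioo _, Measure.restrict_restrict measurableSet_Ioo,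
      Set.inter_eq_left.2 (fun r hr => hr.1)]
    have h3 : ∀ r ∈ Set.Ioo (0:ℝ) R, ENNReal.ofReal (r ^ (d - 1)) *
        ENNReal.ofReal (r ^ (α - (d:ℝ))) = ENNReal.ofReal (r ^ (α - 1)) := by
      intro r hr
      rw [← ENNReal.ofReal_mul (pow_nonneg hr.1.le _)]
      congr 1
      have : (r : ℝ) ^ (d - 1) = r ^ ((d:ℝ) - 1) := by
        rw [← Real.rpow_natCast r (d-1), Nat.cast_sub hd, Nat.cast_one]
      rw [this, ← Real.rpow_add hr.1]
      ring_nf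
    rw [setLIntegral_congr_fun measurableSet_Ioo h3]
    have hInt : IntegrableOn (fun r : ℝ => r ^ (α - 1)) (Set.Ioo 0 R) := by
      rw [intervalIntegral.integrableOn_Ioo_rpow_iff hR]; linarith [hα.1]
    rw [← ofReal_integral_eq_lintegral_ofReal hInt]
    · congr 1
      rw [← integral_Ioc_eq_integral_Ioo, ← intervalIntegral.integral_of_le hR.le,
        integral_rpow (Or.inl (by linarith [hα.1]))]
      simp [sub_add_cancel, Real.zero_rpow (ne_of_gt hα.1)]
    · filter_upwards [ae_restrict_mem measurableSet_Ioo] with r hr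
      exact Real.rpow_nonneg hr.1.le _
  rw [hL] at key
  rw [key, hR']

lemma K2 (hd : 1 ≤ d) {α : ℝ} (hα : α ∈ Set.Ioo (0:ℝ) 1) {R : ℝ} (hR : 0 < R) :
    ∫⁻ h in (ball (0:E) R)ᶜ, ENNReal.ofReal ((‖h‖ ^ ((d:ℝ) + 1 - α))⁻¹)
      = (volume : Measure E).toSphere Set.univ * ENNReal.ofReal (R ^ (α - 1) / (1 - α)) := by
  haveI := aux_nontrivial hd
  set f : ℝ → ℝ≥0∞ := fun t => (Set.Ici R).indicator
    (fun t => ENNReal.ofReal ((t ^ ((d:ℝ) + 1 - α))⁻¹)) t with hf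
  have hfm : Measurable f := by
    apply Measurable.indicator _ measurableSet_Ici
    fun_prop
  have key := my_lintegral_fun_norm_addHaar (volume : Measure E) f hfm
  have hL : ∫⁻ x : E, f ‖x‖ = ∫⁻ h in (ball (0:E) R)ᶜ,
      ENNReal.ofReal ((‖h‖ ^ ((d:ℝ) + 1 - α))⁻¹) := by
    have h1 : (fun x : E => f ‖x‖) = ((ball (0:E) R)ᶜ).indicator
        (fun x => ENNReal.ofReal ((‖x‖ ^ ((d:ℝ) + 1 - α))⁻¹)) := by
      funext x
      have hiff : ‖x‖ ∈ Set.Ici R ↔ x ∈ (ball (0:E) R)ᶜ := by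
        simp [Set.mem_Ici, mem_ball_zero_iff, not_lt]
      by_cases hx : x ∈ (ball (0:E) R)ᶜ
      · rw [Set.indicator_of_mem hx, hf]; simp [Set.indicator_of_mem (hiff.2 hx)]
      · rw [Set.indicator_of_notMem hx, hf]
        simp only
        rw [Set.indicator_of_notMem (fun h => hx (hiff.1 h))]
    rw [h1, lintegral_indicator measurableSet_ball.compl _]
  have hfr : Module.finrank ℝ (EuclideanSpace ℝ (Fin d)) = d := finrank_euclideanSpace_fin
  have hR' : ∫⁻ r in Set.Ioi (0:ℝ),
        ENNReal.ofReal (r ^ (Module.finrank ℝ (EuclideanSpace ℝ (Fin d)) - 1)) * f r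
      = ENNReal.ofReal (R ^ (α - 1) / (1 - α)) := by
    have h2 : (fun r : ℝ => ENNReal.ofReal (r ^ (Module.finrank ℝ (EuclideanSpace ℝ (Fin d)) - 1)) * f r)
        = (Set.Ici R).indicator (fun r => ENNReal.ofReal (r ^ (d - 1)) *
            ENNReal.ofReal ((r ^ ((d:ℝ) + 1 - α))⁻¹)) := by
      funext r
      by_cases hr : r ∈ Set.Ici R
      · simp [hf, Set.indicator_of_mem hr, hfr]
      · simp [hf, Set.indicator_of_notMem hr]
    have hss : Set.Ici R ∩ Set.Ioi (0:ℝ) = Set.Ici R :=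
      Set.inter_eq_left.2 (fun r hr => lt_of_lt_of_le hR hr)
    rw [h2, lintegral_indicator measurableSet_Ici _, Measure.restrict_restrict measurableSet_Ici,
      hss, Measure.restrict_congr_set Ioi_ae_eq_Ici.symm]
    have h3 : ∀ r ∈ Set.Ioi R, ENNReal.ofReal (r ^ (d - 1)) *
        ENNReal.ofReal ((r ^ ((d:ℝ) + 1 - α))⁻¹) = ENNReal.ofReal (r ^ (α - 2)) := by
      intro r hr
      have hrpos : (0:ℝ) < r := lt_trans hR hr
      rw [← ENNReal.ofReal_mul (pow_nonneg hrpos.le _)]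
      congr 1
      have hnp : (r : ℝ) ^ (d - 1) = r ^ ((d:ℝ) - 1) := by
        rw [← Real.rpow_natCast r (d-1), Nat.cast_sub hd, Nat.cast_one]
      rw [hnp, ← Real.rpow_neg hrpos.le, ← Real.rpow_add hrpos]
      ring_nf
    rw [setLIntegral_congr_fun measurableSet_Ioi h3]
    have hInt : IntegrableOn (fun r : ℝ => r ^ (α - 2)) (Set.Ioi R) :=
      integrableOn_Ioi_rpow_of_lt (by linarith [hα.2]) hR
    rw [← ofReal_integral_eq_lintegral_ofReal hInt]
    · congr 1
      rw [integral_Ioi_rpow_of_lt (by linarith [hα.2]) hR]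
      have : α - 2 + 1 = α - 1 := by ring
      rw [this]
      rw [div_eq_div_iff (by linarith [hα.2]) (by linarith [hα.2])]
      ring
    · filter_upwards [ae_restrict_mem measurableSet_Ioi] with r hr
      exact Real.rpow_nonneg (lt_trans hR hr).le _
  rw [hL] at key
  rw [key, hR']

lemma bound_J {u : E → ℝ} (hu : Continuous u) (hi : Integrable u) (h : E) :
    ∫⁻ x : E, ENNReal.ofReal |u (x + h) - u x|
      ≤ 2 * ENNReal.ofReal (∫ x, |u x|) := by
  have hm : Measurable u := hu.measurable
  have step : ∀ x : E, ENNReal.ofReal |u (x + h) - u x|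
      ≤ ENNReal.ofReal |u (x + h)| + ENNReal.ofReal |u x| := by
    intro x
    rw [← ENNReal.ofReal_add (abs_nonneg _) (abs_nonneg _)]
    exact ENNReal.ofReal_le_ofReal (abs_sub _ _)
  calc ∫⁻ x : E, ENNReal.ofReal |u (x + h) - u x|
      ≤ ∫⁻ x : E, (ENNReal.ofReal |u (x + h)| + ENNReal.ofReal |u x|) :=
        lintegral_mono step
    _ = (∫⁻ x : E, ENNReal.ofReal |u (x + h)|) + ∫⁻ x : E, ENNReal.ofReal |u x| :=
        lintegral_add_left (by fun_prop) _
    _ = (∫⁻ x : E, ENNReal.ofReal |u x|) + ∫⁻ x : E, ENNReal.ofReal |u x| := by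
        rw [lintegral_add_right_eq_self (fun x => ENNReal.ofReal |u x|) h]
    _ = 2 * ∫⁻ x : E, ENNReal.ofReal |u x| := by rw [two_mul]
    _ = 2 * ENNReal.ofReal (∫ x, |u x|) := by
        rw [ofReal_integral_eq_lintegral_ofReal hi.abs (ae_of_all _ (fun x => abs_nonneg _))]

lemma bound_I {u : E → ℝ} (hu : ContDiff ℝ 1 u)
    (hi : Integrable fun x => ‖fderiv ℝ u x‖) (h : E) :
    ∫⁻ x : E, ENNReal.ofReal |u (x + h) - u x|
      ≤ ENNReal.ofReal ‖h‖ * ENNReal.ofReal (∫ x, ‖fderiv ℝ u x‖) := by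
  have hfd : Continuous (fderiv ℝ u) := hu.continuous_fderiv one_ne_zero
  have hline : ∀ x : E, Continuous fun t : ℝ => ‖fderiv ℝ u (x + t • h)‖ := by
    intro x
    exact (hfd.comp (continuous_const.add (continuous_id.smul continuous_const))).norm
  have step : ∀ x : E, ENNReal.ofReal |u (x + h) - u x|
      ≤ ∫⁻ t in Set.Ioc (0:ℝ) 1, ENNReal.ofReal (‖fderiv ℝ u (x + t • h)‖ * ‖h‖) := by
    intro x
    have hγ : ∀ t : ℝ, HasDerivAt (fun t : ℝ => u (x + t • h))
        ((fderiv ℝ u (x + t • h)) h) t := by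
      intro t
      have h1 : HasDerivAt (fun t : ℝ => x + t • h) h t := by
        simpa using ((hasDerivAt_id t).smul_const h).const_add x
      exact ((hu.differentiable one_ne_zero) (x + t • h)).hasFDerivAt.comp_hasDerivAt t h1
    have hcont : Continuous fun t : ℝ => (fderiv ℝ u (x + t • h)) h :=
      ((hfd.comp (continuous_const.add (continuous_id.smul continuous_const)))).clm_apply
        continuous_const
    have key : u (x + h) - u x = ∫ t in (0:ℝ)..1, (fderiv ℝ u (x + t • h)) h := by
      rw [intervalIntegral.integral_eq_sub_of_hasDerivAt (fun t _ => hγ t)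
        (hcont.intervalIntegrable _ _)]
      simp
    have habs : |u (x + h) - u x| ≤ ∫ t in (0:ℝ)..1, ‖fderiv ℝ u (x + t • h)‖ * ‖h‖ := by
      rw [key, ← Real.norm_eq_abs]
      refine (intervalIntegral.norm_integral_le_integral_norm zero_le_one).trans ?_
      simp_rw [Real.norm_eq_abs]
      have habs2 : ∀ t : ℝ, |(fderiv ℝ u (x + t • h)) h| = ‖(fderiv ℝ u (x + t • h)) h‖ :=
        fun t => rfl
      simp_rw [habs2]
      apply intervalIntegral.integral_mono_on zero_le_one
        (hcont.norm.intervalIntegrable _ _)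
        (((hline x).mul continuous_const).intervalIntegrable _ _)
      intro t _
      exact (fderiv ℝ u (x + t • h)).le_opNorm h
    refine (ENNReal.ofReal_le_ofReal habs).trans ?_
    rw [intervalIntegral.integral_of_le zero_le_one,
      ofReal_integral_eq_lintegral_ofReal (f := fun t : ℝ => ‖fderiv ℝ u (x + t • h)‖ * ‖h‖)
        (((hline x).mul continuous_const).integrableOn_Ioc)
        (ae_of_all _ (fun t => mul_nonneg (norm_nonneg _) (norm_nonneg _)))]
  have hmeas : Measurable (Function.uncurry fun x (t : ℝ) =>
      ENNReal.ofReal (‖fderiv ℝ u ((x : E) + t • h)‖ * ‖h‖)) := by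
    apply ENNReal.measurable_ofReal.comp
    apply Measurable.mul_const
    exact (hfd.comp ((continuous_fst.add (continuous_snd.smul continuous_const)))).norm.measurable
  calc ∫⁻ x : E, ENNReal.ofReal |u (x + h) - u x|
      ≤ ∫⁻ x : E, ∫⁻ t in Set.Ioc (0:ℝ) 1,
          ENNReal.ofReal (‖fderiv ℝ u (x + t • h)‖ * ‖h‖) := lintegral_mono step
    _ = ∫⁻ t in Set.Ioc (0:ℝ) 1, ∫⁻ x : E,
          ENNReal.ofReal (‖fderiv ℝ u (x + t • h)‖ * ‖h‖) :=
        lintegral_lintegral_swap hmeas.aemeasurable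
    _ = ∫⁻ t in Set.Ioc (0:ℝ) 1,
          (ENNReal.ofReal (∫ x, ‖fderiv ℝ u x‖) * ENNReal.ofReal ‖h‖) := by
        apply setLIntegral_congr_fun measurableSet_Ioc
        intro t _
        simp_rw [ENNReal.ofReal_mul (norm_nonneg _)]
        rw [lintegral_mul_const _ (by fun_prop)]
        congr 1
        rw [lintegral_add_right_eq_self (fun y => ENNReal.ofReal ‖fderiv ℝ u y‖) (t • h)]
        rw [ofReal_integral_eq_lintegral_ofReal hi (ae_of_all _ (fun x => norm_nonneg _))]
    _ = ENNReal.ofReal ‖h‖ * ENNReal.ofReal (∫ x, ‖fderiv ℝ u x‖) := by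
        rw [setLIntegral_const, Real.volume_Ioc]
        simp [mul_comm]

end Aux

lemma alg1 {I J α : ℝ} (hI : 0 < I) (hJ : 0 < J) :
    I * (J / I) ^ α = I ^ (1 - α) * J ^ α := by
  rw [Real.div_rpow hJ.le hI.le, Real.rpow_sub hI 1 α, Real.rpow_one]
  field_simp

lemma alg2 {I J α : ℝ} (hI : 0 < I) (hJ : 0 < J) :
    J * (J / I) ^ (α - 1) = I ^ (1 - α) * J ^ α := by
  have hIsplit : I ^ (1 - α) * I ^ α = I := by
    rw [← Real.rpow_add hI]; norm_num
  have hJsplit : J * J ^ (α - 1) = J ^ α := by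
    rw [Real.rpow_sub hJ α 1, Real.rpow_one]
    field_simp
  rw [Real.div_rpow hJ.le hI.le, Real.rpow_sub hJ α 1, Real.rpow_sub hI α 1,
    Real.rpow_one, Real.rpow_one]
  have hIα : (0:ℝ) < I ^ α := Real.rpow_pos_of_pos hI α
  field_simp
  linear_combination (-1:ℝ) * hIsplit



/-- The Gagliardo `W^{1-α,1}` seminorm of `u : ℝ^d → ℝ`, as an extended real. -/
noncomputable def gagliardo (d : ℕ) (α : ℝ) (u : EuclideanSpace ℝ (Fin d) → ℝ) : ENNReal :=
  ∫⁻ x, ∫⁻ y, ENNReal.ofReal (|u x - u y| / ‖x - y‖ ^ ((d : ℝ) + 1 - α))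

set_option maxHeartbeats 1000000 in
theorem stmt0 (d : ℕ) (hd : 1 ≤ d) (α : ℝ) (hα : α ∈ Set.Ioo (0 : ℝ) 1) :
    ∃ C > (0 : ℝ), ∀ u : EuclideanSpace ℝ (Fin d) → ℝ,
      ContDiff ℝ 1 u → Integrable u → Integrable (fun x => ‖fderiv ℝ u x‖) →
      gagliardo d α u ≤
        ENNReal.ofReal
          (C * (∫ x, ‖fderiv ℝ u x‖) ^ (1 - α) * (∫ x, |u x|) ^ α) := by
  obtain ⟨hα0, hα1⟩ := hα
  have h1α : (0:ℝ) < 1 - α := by linarith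
  haveI : Nonempty (Fin d) := ⟨⟨0, hd⟩⟩
  set c : ENNReal := (volume : Measure (EuclideanSpace ℝ (Fin d))).toSphere Set.univ with hcdef
  set c' : ℝ := c.toReal with hc'def
  have hc'0 : 0 ≤ c' := ENNReal.toReal_nonneg
  have hcoef : 0 ≤ c' * (1/α + 2/(1-α)) :=
    mul_nonneg hc'0 (add_nonneg (by positivity) (le_of_lt (by positivity)))
  refine ⟨c' * (1/α + 2/(1-α)) + 1, by linarith, ?_⟩
  intro u hu hi hi'
  by_cases hu0 : u = fun _ => (0:ℝ)
  · have hz : gagliardo d α u = 0 := by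
      rw [hu0]; simp [gagliardo]
    rw [hz]; exact zero_le
  set I := ∫ x, ‖fderiv ℝ u x‖ with hIdef
  set J := ∫ x, |u x| with hJdef
  have hJpos : 0 < J := by
    rcases lt_or_eq_of_le (integral_nonneg (f := fun x => |u x|) (fun x => abs_nonneg (u x))) with h | h
    · exact h
    exfalso; apply hu0
    have hae := (integral_eq_zero_iff_of_nonneg (fun x => abs_nonneg (u x)) hi.abs).1 h.symm
    have habs : (fun x => |u x|) = fun _ => (0:ℝ) :=
      (hu.continuous.abs.ae_eq_iff_eq volume continuous_const).1 hae
    funext x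
    have := congrFun habs x
    simpa using this
  have hIpos : 0 < I := by
    rcases lt_or_eq_of_le (integral_nonneg (f := fun x => ‖fderiv ℝ u x‖) (fun x => norm_nonneg (fderiv ℝ u x))) with h | h
    · exact h
    exfalso; apply hu0
    have hae := (integral_eq_zero_iff_of_nonneg (fun x => norm_nonneg _) hi').1 h.symm
    have hnn : (fun x => ‖fderiv ℝ u x‖) = fun _ => (0:ℝ) :=
      ((hu.continuous_fderiv one_ne_zero).norm.ae_eq_iff_eq volume continuous_const).1 hae
    have hfz : ∀ x, fderiv ℝ u x = 0 := by
      intro x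
      have := congrFun hnn x
      simpa using this
    have hconst : u = fun _ => u 0 :=
      funext fun x => is_const_of_fderiv_eq_zero (hu.differentiable one_ne_zero) hfz x 0
    rw [hconst] at hi
    rcases integrable_const_iff.1 hi with h0 | hfin
    · rw [hconst, h0]
    · have hfin := hfin.measure_univ_lt_top
      rw [MeasureTheory.measure_univ_of_isAddLeftInvariant] at hfin
      exact absurd hfin (lt_irrefl _)
  set r : ℝ := J / I with hrdef
  have hrpos : 0 < r := div_pos hJpos hIpos
  set β : ℝ := (d:ℝ) + 1 - α with hβdef
  have hβpos : 0 < β := by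
    have : (1:ℝ) ≤ (d:ℝ) := by exact_mod_cast hd
    rw [hβdef]; linarith
  have hαd : α - (d:ℝ) ≠ 0 := by
    have : (1:ℝ) ≤ (d:ℝ) := by exact_mod_cast hd
    intro hc0; linarith [hα1]
  -- rewrite gagliardo as a single integral in h
  set G : EuclideanSpace ℝ (Fin d) → ENNReal := fun h =>
    ∫⁻ x, ENNReal.ofReal (|u x - u (x + h)| / ‖h‖ ^ β) with hGdef
  have hΦm : Measurable (Function.uncurry fun x h : EuclideanSpace ℝ (Fin d) =>
      ENNReal.ofReal (|u x - u (x + h)| / ‖h‖ ^ β)) := by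
    apply ENNReal.measurable_ofReal.comp
    apply Measurable.div
    · exact ((hu.continuous.comp continuous_fst).sub
        (hu.continuous.comp (continuous_fst.add continuous_snd))).abs.measurable
    · have : Measurable fun t : ℝ => t ^ β := by measurability
      exact this.comp continuous_snd.norm.measurable
  have hgag : gagliardo d α u = ∫⁻ h, G h := by
    have hstep : gagliardo d α u = ∫⁻ x, ∫⁻ h,
        ENNReal.ofReal (|u x - u (x + h)| / ‖h‖ ^ β) := by
      unfold gagliardo
      apply lintegral_congr
      intro x
      rw [← lintegral_add_left_eq_self
        (fun y => ENNReal.ofReal (|u x - u y| / ‖x - y‖ ^ ((d:ℝ) + 1 - α))) x]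
      apply lintegral_congr
      intro h
      have hxy : x - (x + h) = -h := by abel
      rw [hxy, norm_neg, ← hβdef]
    rw [hstep]
    exact lintegral_lintegral_swap hΦm.aemeasurable
  have hG : ∀ h : EuclideanSpace ℝ (Fin d), G h =
      (∫⁻ x, ENNReal.ofReal |u (x + h) - u x|) * ENNReal.ofReal ((‖h‖ ^ β)⁻¹) := by
    intro h
    rw [hGdef]
    simp only [div_eq_mul_inv]
    have : ∀ x, ENNReal.ofReal (|u x - u (x + h)| * (‖h‖ ^ β)⁻¹)
        = ENNReal.ofReal |u (x + h) - u x| * ENNReal.ofReal ((‖h‖ ^ β)⁻¹) := by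
      intro x
      rw [abs_sub_comm (u x), ENNReal.ofReal_mul (abs_nonneg _)]
    simp_rw [this]
    exact lintegral_mul_const _ (ENNReal.measurable_ofReal.comp
      ((hu.continuous.comp (continuous_id.add continuous_const)).sub
        hu.continuous).abs.measurable)
  -- pointwise bounds
  have hpoint1 : ∀ h : EuclideanSpace ℝ (Fin d),
      G h ≤ ENNReal.ofReal I * ENNReal.ofReal (‖h‖ ^ (α - (d:ℝ))) := by
    intro h
    rw [hG h]
    calc (∫⁻ x, ENNReal.ofReal |u (x + h) - u x|) * ENNReal.ofReal ((‖h‖ ^ β)⁻¹)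
        ≤ (ENNReal.ofReal ‖h‖ * ENNReal.ofReal I) * ENNReal.ofReal ((‖h‖ ^ β)⁻¹) :=
          mul_le_mul_left (bound_I hu hi' h) _
      _ = ENNReal.ofReal I * (ENNReal.ofReal ‖h‖ * ENNReal.ofReal ((‖h‖ ^ β)⁻¹)) := by ring
      _ = ENNReal.ofReal I * ENNReal.ofReal (‖h‖ ^ (α - (d:ℝ))) := by
          congr 1
          rw [← ENNReal.ofReal_mul (norm_nonneg _)]
          congr 1
          by_cases h0 : h = 0
          · rw [h0]
            simp [Real.zero_rpow (ne_of_gt hβpos), Real.zero_rpow hαd]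
          · have hn : 0 < ‖h‖ := norm_pos_iff.2 h0
            have e : ‖h‖ * (‖h‖ ^ β)⁻¹ = ‖h‖ ^ ((1:ℝ) - β) := by
              rw [Real.rpow_sub hn 1 β, Real.rpow_one, div_eq_mul_inv]
            rw [e]
            congr 1
            rw [hβdef]; ring
  have hpoint2 : ∀ h : EuclideanSpace ℝ (Fin d),
      G h ≤ 2 * ENNReal.ofReal J * ENNReal.ofReal ((‖h‖ ^ β)⁻¹) := by
    intro h
    rw [hG h]
    exact mul_le_mul_left (bound_J hu.continuous hi h) _
  -- split the integral
  have hsplit : ∫⁻ h, G h = (∫⁻ h in Metric.ball (0:EuclideanSpace ℝ (Fin d)) r, G h)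
      + ∫⁻ h in (Metric.ball (0:EuclideanSpace ℝ (Fin d)) r)ᶜ, G h :=
    (lintegral_add_compl G measurableSet_ball).symm
  have hball : ∫⁻ h in Metric.ball (0:EuclideanSpace ℝ (Fin d)) r, G h
      ≤ ENNReal.ofReal I * (c * ENNReal.ofReal (r ^ α / α)) := by
    calc ∫⁻ h in Metric.ball (0:EuclideanSpace ℝ (Fin d)) r, G h
        ≤ ∫⁻ h in Metric.ball (0:EuclideanSpace ℝ (Fin d)) r,
            ENNReal.ofReal I * ENNReal.ofReal (‖h‖ ^ (α - (d:ℝ))) := lintegral_mono hpoint1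
      _ = ENNReal.ofReal I * ∫⁻ h in Metric.ball (0:EuclideanSpace ℝ (Fin d)) r,
            ENNReal.ofReal (‖h‖ ^ (α - (d:ℝ))) :=
          lintegral_const_mul' _ _ ENNReal.ofReal_ne_top
      _ = ENNReal.ofReal I * (c * ENNReal.ofReal (r ^ α / α)) := by
          rw [K1 hd ⟨hα0, hα1⟩ hrpos, hcdef]
  have hcompl : ∫⁻ h in (Metric.ball (0:EuclideanSpace ℝ (Fin d)) r)ᶜ, G h
      ≤ 2 * ENNReal.ofReal J * (c * ENNReal.ofReal (r ^ (α - 1) / (1 - α))) := by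
    calc ∫⁻ h in (Metric.ball (0:EuclideanSpace ℝ (Fin d)) r)ᶜ, G h
        ≤ ∫⁻ h in (Metric.ball (0:EuclideanSpace ℝ (Fin d)) r)ᶜ,
            2 * ENNReal.ofReal J * ENNReal.ofReal ((‖h‖ ^ β)⁻¹) := lintegral_mono hpoint2
      _ = 2 * ENNReal.ofReal J * ∫⁻ h in (Metric.ball (0:EuclideanSpace ℝ (Fin d)) r)ᶜ,
            ENNReal.ofReal ((‖h‖ ^ β)⁻¹) := by
          apply lintegral_const_mul' _ _
          exact ENNReal.mul_ne_top (by simp) ENNReal.ofReal_ne_top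
      _ = 2 * ENNReal.ofReal J * (c * ENNReal.ofReal (r ^ (α - 1) / (1 - α))) := by
          rw [hβdef, K2 hd ⟨hα0, hα1⟩ hrpos, hcdef]
  -- assemble
  have htotal : gagliardo d α u ≤ ENNReal.ofReal I * (c * ENNReal.ofReal (r ^ α / α))
      + 2 * ENNReal.ofReal J * (c * ENNReal.ofReal (r ^ (α - 1) / (1 - α))) := by
    rw [hgag, hsplit]
    exact add_le_add hball hcompl
  have hcfin : c ≠ ⊤ := measure_ne_top _ _
  have hcof : c = ENNReal.ofReal c' := (ENNReal.ofReal_toReal hcfin).symm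
  have hrw : ENNReal.ofReal I * (c * ENNReal.ofReal (r ^ α / α))
      + 2 * ENNReal.ofReal J * (c * ENNReal.ofReal (r ^ (α - 1) / (1 - α)))
      = ENNReal.ofReal (I * (c' * (r ^ α / α)) + 2 * J * (c' * (r ^ (α - 1) / (1 - α)))) := by
    rw [hcof]
    rw [ENNReal.ofReal_add (by positivity) (by positivity)]
    congr 1
    · rw [ENNReal.ofReal_mul hIpos.le, ENNReal.ofReal_mul hc'0]
    · rw [ENNReal.ofReal_mul (by positivity), ENNReal.ofReal_mul (by positivity),
        ENNReal.ofReal_mul hc'0]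
      congr 1
      rw [ENNReal.ofReal_ofNat]
  rw [hrw] at htotal
  refine htotal.trans (ENNReal.ofReal_le_ofReal ?_)
  -- final real inequality
  have hIα : (0:ℝ) < I ^ α := Real.rpow_pos_of_pos hIpos α
  have hJα : (0:ℝ) < J ^ α := Real.rpow_pos_of_pos hJpos α
  have e1 : I * r ^ α = I ^ (1 - α) * J ^ α := alg1 hIpos hJpos
  have e2 : J * r ^ (α - 1) = I ^ (1 - α) * J ^ α := alg2 hIpos hJpos
  have hX : 0 ≤ I ^ (1 - α) * J ^ α := by positivity
  calc I * (c' * (r ^ α / α)) + 2 * J * (c' * (r ^ (α - 1) / (1 - α)))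
      = (c' / α) * (I * r ^ α) + (2 * c' / (1 - α)) * (J * r ^ (α - 1)) := by ring
    _ = (c' / α + 2 * c' / (1 - α)) * (I ^ (1 - α) * J ^ α) := by rw [e1, e2]; ring
    _ ≤ (c' * (1/α + 2/(1-α)) + 1) * (I ^ (1 - α) * J ^ α) := by
        apply mul_le_mul_of_nonneg_right _ hX
        have : c' / α + 2 * c' / (1 - α) = c' * (1/α + 2/(1-α)) := by ring
        rw [this]; linarith
    _ = (c' * (1/α + 2/(1-α)) + 1) * I ^ (1 - α) * J ^ α := by ring
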